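/- arXiv:1704.06552 — 3 statements merged into one kernel-verified Lean document; each statement's English description precedes it below -/
import Mathlib

section
/- Let H be a Hopf algebra with invertible antipode and M an anti-Yetter-Drinfeld module. Then σ_M: M → M, m ↦ m₁m₀, is an H-module and H-comodule automorphism of M with inverse m ↦ S⁻¹(m₁)m₀, and for any morphism θ: M → M' of anti-Yetter-Drinfeld modules, θ ∘ σ_M = σ_{M'} ∘ θ. -/
open TensorProduct LinearMap

noncomputable section

universe u

/-- A right `H`-comodule structure on `V`. -/
structure RComod (k : Type u) (H V : Type u) [CommRing k] [AddCommGroup H] [Module k H]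
    [Coalgebra k H] [AddCommGroup V] [Module k V] where
  ρ : V →ₗ[k] V ⊗[k] H
  coassoc : (TensorProduct.assoc k V H H).toLinearMap ∘ₗ (ρ.rTensor H) ∘ₗ ρ
      = (LinearMap.lTensor V (Coalgebra.comul (R := k) (A := H))) ∘ₗ ρ
  counit_id : (TensorProduct.rid k V).toLinearMap ∘ₗ
      (LinearMap.lTensor V (Coalgebra.counit (R := k) (A := H))) ∘ₗ ρ = LinearMap.id

/-- A right `H`-contramodule structure on `N`. -/
structure RContramod (k : Type u) (H N : Type u) [CommRing k] [AddCommGroup H] [Module k H]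
    [Coalgebra k H] [AddCommGroup N] [Module k N] where
  α : (H →ₗ[k] N) →ₗ[k] N
  contraassoc : ∀ f : H ⊗[k] H →ₗ[k] N,
      α (α ∘ₗ (TensorProduct.curry f)) = α (f ∘ₗ Coalgebra.comul (R := k) (A := H))
  counit_id : ∀ n : N, α ((Coalgebra.counit (R := k) (A := H)).smulRight n) = n

/-- The action of `h : H` on `N` as a `k`-linear map. -/
def hSmulMap (k : Type u) {H N : Type u} [CommRing k] [Ring H] [AddCommGroup N] [Module k N]
    [Module H N] [SMulCommClass k H N] (h : H) : N →ₗ[k] N where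
  toFun n := h • n
  map_add' a b := smul_add h a b
  map_smul' c n := (smul_comm c h n).symm

section Hopf
variable (k H : Type u) [CommRing k] [Ring H] [HopfAlgebra k H]

/-- `(Δ ⊗ id) ∘ Δ`, the triple comultiplication. -/
def comul₂ : H →ₗ[k] (H ⊗[k] H) ⊗[k] H :=
  (LinearMap.rTensor H (Coalgebra.comul (R := k) (A := H))) ∘ₗ Coalgebra.comul (R := k)

variable {k H}

/-- The anti-Yetter-Drinfeld (more generally `YD_i`) compatibility, stated via Sweedler
representations: whenever `(Δ ⊗ id)(Δ h) = ∑ h¹ ⊗ h² ⊗ h³` and `ρ m = ∑ m₀ ⊗ m₁`, we have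
`ρ(h • m) = ∑ h² m₀ ⊗ h³ m₁ T(h¹)` where `T` is a given twist (e.g. the antipode). -/
def IsYDtw {M : Type u} [AddCommGroup M] [Module k M] [Module H M] [SMulCommClass k H M]
    (T : H →ₗ[k] H) (c : RComod k H M) : Prop :=
  ∀ (h : H) (m : M) (n p : ℕ) (h1 h2 h3 : Fin n → H) (m0 : Fin p → M) (m1 : Fin p → H),
    comul₂ k H h = ∑ i, (h1 i ⊗ₜ[k] h2 i) ⊗ₜ[k] h3 i →
    c.ρ m = ∑ j, m0 j ⊗ₜ[k] m1 j →
    c.ρ (h • m) = ∑ i, ∑ j, (h2 i • m0 j) ⊗ₜ[k] (h3 i * m1 j * T (h1 i))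

/-- The anti-Yetter-Drinfeld compatibility `(hm)₀ ⊗ (hm)₁ = h²m₀ ⊗ h³m₁S(h¹)`. -/
def IsAYD {M : Type u} [AddCommGroup M] [Module k M] [Module H M] [SMulCommClass k H M]
    (c : RComod k H M) : Prop :=
  IsYDtw (HopfAlgebra.antipode (R := k) (A := H)) c

/-- The anti-Yetter-Drinfeld contramodule compatibility (for a general twist `T` in place of
`S²` in `S^{2-2i}`): `h • α(f) = α(x ↦ h² f(S(h³) x T(h¹)))`, via Sweedler representations. -/
def IsYDContratw {N : Type u} [AddCommGroup N] [Module k N] [Module H N] [SMulCommClass k H N]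
    (T : H →ₗ[k] H) (c : RContramod k H N) : Prop :=
  ∀ (h : H) (f : H →ₗ[k] N) (n : ℕ) (h1 h2 h3 : Fin n → H),
    comul₂ k H h = ∑ i, (h1 i ⊗ₜ[k] h2 i) ⊗ₜ[k] h3 i →
    h • c.α f = c.α (∑ i, hSmulMap k (h2 i) ∘ₗ f ∘ₗ
      (LinearMap.mulLeft k (HopfAlgebra.antipode (R := k) (A := H) (h3 i)) ∘ₗ
        LinearMap.mulRight k (T (h1 i))))

/-- The anti-Yetter-Drinfeld contramodule compatibility
`h • α(f) = α(x ↦ h² f(S(h³) x h¹))`. -/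
def IsAYDContra {N : Type u} [AddCommGroup N] [Module k N] [Module H N] [SMulCommClass k H N]
    (c : RContramod k H N) : Prop :=
  IsYDContratw LinearMap.id c

end Hopf

section ComodHom
variable {k H A B : Type u} [CommRing k] [AddCommGroup H] [Module k H] [Coalgebra k H]
  [AddCommGroup A] [Module k A] [AddCommGroup B] [Module k B]

/-- `f : A → B` is a map of right `H`-comodules. -/
def IsComodHom (ρA : A →ₗ[k] A ⊗[k] H) (ρB : B →ₗ[k] B ⊗[k] H) (f : A →ₗ[k] B) : Prop :=
  ρB ∘ₗ f = (f.rTensor H) ∘ₗ ρA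

end ComodHom

section TensorCoact
variable {k H A B : Type u} [CommRing k] [Ring H] [Bialgebra k H]
  [AddCommGroup A] [Module k A] [AddCommGroup B] [Module k B]

/-- The coaction on a tensor product of comodules: `a ⊗ b ↦ a₀ ⊗ b₀ ⊗ a₁b₁`. -/
def tensorCoaction (ρA : A →ₗ[k] A ⊗[k] H) (ρB : B →ₗ[k] B ⊗[k] H) :
    A ⊗[k] B →ₗ[k] (A ⊗[k] B) ⊗[k] H :=
  (LinearMap.lTensor (A ⊗[k] B) (LinearMap.mul' k H)) ∘ₗ
    (TensorProduct.tensorTensorTensorComm k A H B H).toLinearMap ∘ₗ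
      TensorProduct.map ρA ρB

/-- The trivial coaction on `k`. -/
def trivialCoaction (k H : Type u) [CommRing k] [Ring H] [Bialgebra k H] :
    k →ₗ[k] k ⊗[k] H :=
  (TensorProduct.mk k k H).flip 1

end TensorCoact

end

noncomputable section Prelude2

universe v

open TensorProduct LinearMap

section Act
variable (k H M : Type v) [CommRing k] [Ring H] [Algebra k H] [AddCommGroup M] [Module k M]
  [Module H M] [SMulCommClass k H M] [IsScalarTower k H M]

/-- The action of `H` on `M` as a `k`-bilinear map. -/
def actBil : H →ₗ[k] M →ₗ[k] M where
  toFun h := hSmulMap k h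
  map_add' h h' := by ext m; simp [hSmulMap, add_smul]
  map_smul' c h := by ext m; simp [hSmulMap, smul_assoc]

/-- The action of `H` on `M` as a `k`-linear map out of the tensor product. -/
def actMap : H ⊗[k] M →ₗ[k] M := TensorProduct.lift (actBil k H M)

end Act

section YDAct
variable {k H : Type v} [CommRing k] [Ring H] [HopfAlgebra k H]
variable {M : Type v} [AddCommGroup M] [Module k M]

/-- `act` is a unital, multiplicative action of `H`. -/
def IsActionMap (act : H →ₗ[k] M →ₗ[k] M) : Prop :=
  act 1 = LinearMap.id ∧ ∀ g h : H, act (g * h) = (act g) ∘ₗ (act h)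

/-- Generalized (anti-)Yetter-Drinfeld compatibility with twist `T` for an action given
by a bilinear map `act`: whenever `(Δ ⊗ id)(Δ h) = ∑ h¹ ⊗ h² ⊗ h³` and `ρ m = ∑ m₀ ⊗ m₁`,
we have `ρ(h · m) = ∑ (h² · m₀) ⊗ h³ m₁ T(h¹)`. -/
def IsYDAct (T : H →ₗ[k] H) (act : H →ₗ[k] M →ₗ[k] M) (c : RComod k H M) : Prop :=
  ∀ (h : H) (m : M) (n p : ℕ) (h1 h2 h3 : Fin n → H) (m0 : Fin p → M) (m1 : Fin p → H),
    comul₂ k H h = ∑ i, (h1 i ⊗ₜ[k] h2 i) ⊗ₜ[k] h3 i →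
    c.ρ m = ∑ j, m0 j ⊗ₜ[k] m1 j →
    c.ρ (act h m) = ∑ i, ∑ j, (act (h2 i) (m0 j)) ⊗ₜ[k] (h3 i * m1 j * T (h1 i))

/-- The antipode together with a two-sided inverse, as a unit of `Module.End k H`. -/
def antipodeUnit (Sinv : H →ₗ[k] H)
    (h1 : (HopfAlgebra.antipode (R := k) (A := H)) ∘ₗ Sinv = LinearMap.id)
    (h2 : Sinv ∘ₗ (HopfAlgebra.antipode (R := k) (A := H)) = LinearMap.id) :
    (Module.End k H)ˣ where
  val := HopfAlgebra.antipode (R := k) (A := H)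
  inv := Sinv
  val_inv := by rw [Module.End.mul_eq_comp, h1, Module.End.one_eq_id]
  inv_val := by rw [Module.End.mul_eq_comp, h2, Module.End.one_eq_id]

end YDAct
end Prelude2

noncomputable section Statement9
open TensorProduct LinearMap

universe w
variable {k H M M' : Type w} [Field k] [Ring H] [HopfAlgebra k H]
  [AddCommGroup M] [Module k M] [Module H M] [SMulCommClass k H M] [IsScalarTower k H M]
  [AddCommGroup M'] [Module k M'] [Module H M'] [SMulCommClass k H M'] [IsScalarTower k H M']

/-- `σ : m ↦ m₁ • m₀`. -/
def sigmaMap (cM : RComod k H M) : M →ₗ[k] M :=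
  actMap k H M ∘ₗ (TensorProduct.comm k M H).toLinearMap ∘ₗ cM.ρ

/-- `m ↦ S⁻¹(m₁) • m₀`. -/
def sigmaInvMap (Sinv : H →ₗ[k] H) (cM : RComod k H M) : M →ₗ[k] M :=
  actMap k H M ∘ₗ (TensorProduct.comm k M H).toLinearMap ∘ₗ
    (LinearMap.lTensor M Sinv) ∘ₗ cM.ρ

section AYDAux

set_option linter.unusedSectionVars false

open Coalgebra HopfAlgebra

local notation "𝒮" => (HopfAlgebra.antipode (R := k) (A := H))

lemma aux_sum_counit_smul {A : Type w} [AddCommGroup A] [Module k A] [Coalgebra k A] {a : A} {ι : Type*}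
    (r : Coalgebra.Repr k a ι) :
    ∑ i ∈ r.index, Coalgebra.counit (R := k) (r.left i) • r.right i = a := by
  have h := Coalgebra.sum_counit_tmul_eq r
  apply_fun (TensorProduct.lid k A) at h
  simpa [map_sum, -Coalgebra.sum_counit_tmul_eq] using h

lemma aux_sum_smul_counit {A : Type w} [AddCommGroup A] [Module k A] [Coalgebra k A] {a : A} {ι : Type*}
    (r : Coalgebra.Repr k a ι) :
    ∑ i ∈ r.index, Coalgebra.counit (R := k) (r.right i) • r.left i = a := by
  have h := Coalgebra.sum_tmul_counit_eq r
  apply_fun (TensorProduct.rid k A) at h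
  simpa [map_sum, -Coalgebra.sum_tmul_counit_eq] using h

/-- Convolution product on `Hom(H ⊗ H, H)`. -/
def convP (f g : (H ⊗[k] H) →ₗ[k] H) : (H ⊗[k] H) →ₗ[k] H :=
  LinearMap.mul' k H ∘ₗ TensorProduct.map f g ∘ₗ Coalgebra.comul

/-- The convolution unit. -/
def unitC : (H ⊗[k] H) →ₗ[k] H :=
  Algebra.linearMap k H ∘ₗ Coalgebra.counit

lemma convP_repr (f g : (H ⊗[k] H) →ₗ[k] H) (x : H ⊗[k] H) {ι : Type*} (r : Coalgebra.Repr k x ι) :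
    convP f g x = ∑ i ∈ r.index, f (r.left i) * g (r.right i) := by
  simp only [convP, LinearMap.comp_apply]
  rw [← r.eq]
  simp [map_sum]

lemma convP_unit_left (f : (H ⊗[k] H) →ₗ[k] H) : convP unitC f = f := by
  refine LinearMap.ext fun x => ?_
  have r := Coalgebra.Repr.arbitrary k x
  rw [convP_repr _ _ _ r]
  calc ∑ i ∈ r.index, unitC (r.left i) * f (r.right i)
      = ∑ i ∈ r.index, Coalgebra.counit (R := k) (r.left i) • f (r.right i) := by
        refine Finset.sum_congr rfl fun i _ => ?_
        simp [unitC, Algebra.smul_def]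
    _ = f (∑ i ∈ r.index, Coalgebra.counit (R := k) (r.left i) • r.right i) := by
        rw [map_sum]; simp
    _ = f x := by rw [aux_sum_counit_smul]

lemma convP_unit_right (f : (H ⊗[k] H) →ₗ[k] H) : convP f unitC = f := by
  refine LinearMap.ext fun x => ?_
  have r := Coalgebra.Repr.arbitrary k x
  rw [convP_repr _ _ _ r]
  calc ∑ i ∈ r.index, f (r.left i) * unitC (r.right i)
      = ∑ i ∈ r.index, Coalgebra.counit (R := k) (r.right i) • f (r.left i) := by
        refine Finset.sum_congr rfl fun i _ => ?_
        simp [unitC, Algebra.smul_def, Algebra.commutes]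
    _ = f (∑ i ∈ r.index, Coalgebra.counit (R := k) (r.right i) • r.left i) := by
        rw [map_sum]; simp
    _ = f x := by rw [aux_sum_smul_counit]

lemma convP_assoc (f g h : (H ⊗[k] H) →ₗ[k] H) :
    convP (convP f g) h = convP f (convP g h) := by
  refine LinearMap.ext fun x => ?_
  have r := Coalgebra.Repr.arbitrary k x
  have a₁ : ∀ i, Coalgebra.Repr k (r.left i) ((H ⊗[k] H) × (H ⊗[k] H)) := fun i => Coalgebra.Repr.arbitrary k (r.left i)
  have a₂ : ∀ i, Coalgebra.Repr k (r.right i) ((H ⊗[k] H) × (H ⊗[k] H)) := fun i => Coalgebra.Repr.arbitrary k (r.right i)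
  have key := Coalgebra.sum_map_tmul_tmul_eq (R := k) f g h x (repr := r) (a₁ := a₁) (a₂ := a₂)
  apply_fun (LinearMap.mul' k H ∘ₗ LinearMap.lTensor H (LinearMap.mul' k H)) at key
  simp only [map_sum, LinearMap.comp_apply, LinearMap.lTensor_tmul, LinearMap.mul'_apply] at key
  rw [convP_repr _ _ _ r, convP_repr _ _ _ r]
  calc ∑ i ∈ r.index, convP f g (r.left i) * h (r.right i)
      = ∑ i ∈ r.index, ∑ j ∈ (a₁ i).index,
          f ((a₁ i).left j) * (g ((a₁ i).right j) * h (r.right i)) := by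
        refine Finset.sum_congr rfl fun i _ => ?_
        rw [convP_repr _ _ _ (a₁ i), Finset.sum_mul]
        simp [mul_assoc]
    _ = ∑ i ∈ r.index, ∑ j ∈ (a₂ i).index,
          f (r.left i) * (g ((a₂ i).left j) * h ((a₂ i).right j)) := key.symm
    _ = ∑ i ∈ r.index, f (r.left i) * convP g h (r.right i) := by
        refine Finset.sum_congr rfl fun i _ => ?_
        rw [convP_repr _ _ _ (a₂ i), Finset.mul_sum]

lemma mulCoalgHom :
    (TensorProduct.map (LinearMap.mul' k H) (LinearMap.mul' k H)) ∘ₗ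
      (Coalgebra.comul (R := k) (A := H ⊗[k] H))
    = (Coalgebra.comul (R := k) (A := H)) ∘ₗ LinearMap.mul' k H := by
  apply TensorProduct.ext'
  intro a b
  have ra := Coalgebra.Repr.arbitrary k a
  have rb := Coalgebra.Repr.arbitrary k b
  simp only [LinearMap.comp_apply, LinearMap.mul'_apply]
  rw [TensorProduct.comul_def]
  simp only [LinearMap.comp_apply, TensorProduct.map_tmul, TensorProduct.AlgebraTensorModule.map_tmul,
    TensorProduct.AlgebraTensorModule.tensorTensorTensorComm_eq]
  rw [← ra.eq, ← rb.eq]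
  rw [show Coalgebra.comul (R := k) (a * b) = Coalgebra.comul (R := k) a * Coalgebra.comul (R:=k) b
    from Bialgebra.comul_mul a b, ← ra.eq, ← rb.eq]
  rw [TensorProduct.sum_tmul, map_sum, map_sum, Finset.sum_mul_sum]
  refine Finset.sum_congr rfl fun i _ => ?_
  rw [TensorProduct.tmul_sum, map_sum, map_sum]
  refine Finset.sum_congr rfl fun j _ => ?_
  simp [Algebra.TensorProduct.tmul_mul_tmul]

lemma counitMul :
    (Coalgebra.counit (R := k) (A := H)) ∘ₗ LinearMap.mul' k H
      = (Coalgebra.counit (R := k) (A := H ⊗[k] H)) := by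
  apply TensorProduct.ext'
  intro a b
  simp [TensorProduct.counit_tmul, mul_comm]

lemma conv_antipode_mul : convP (𝒮 ∘ₗ LinearMap.mul' k H) (LinearMap.mul' k H)
    = (unitC : (H ⊗[k] H) →ₗ[k] H) := by
  refine LinearMap.ext fun x => ?_
  have h1 : TensorProduct.map (𝒮 ∘ₗ LinearMap.mul' k H) (LinearMap.mul' k H)
      = (LinearMap.rTensor H 𝒮) ∘ₗ TensorProduct.map (LinearMap.mul' k H) (LinearMap.mul' k H) := by
    apply TensorProduct.ext'
    intro z w
    simp
  have h2 := LinearMap.congr_fun (mulCoalgHom (k := k) (H := H)) x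
  simp only [LinearMap.comp_apply] at h2
  simp only [convP, LinearMap.comp_apply, h1]
  rw [h2]
  simp only [LinearMap.comp_apply, mul_antipode_rTensor_comul_apply]
  have h3 := LinearMap.congr_fun (counitMul (k := k) (H := H)) x
  simp only [LinearMap.comp_apply] at h3
  rw [h3]
  simp [unitC]

lemma conv_mul_antipode :
    convP (LinearMap.mul' k H)
      (LinearMap.mul' k H ∘ₗ TensorProduct.map 𝒮 𝒮 ∘ₗ (TensorProduct.comm k H H).toLinearMap)
    = (unitC : (H ⊗[k] H) →ₗ[k] H) := by
  apply TensorProduct.ext'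
  intro a b
  have ra := Coalgebra.Repr.arbitrary k a
  have rb := Coalgebra.Repr.arbitrary k b
  simp only [convP, LinearMap.comp_apply]
  rw [TensorProduct.comul_def]
  simp only [LinearMap.comp_apply, TensorProduct.map_tmul, TensorProduct.AlgebraTensorModule.map_tmul,
    TensorProduct.AlgebraTensorModule.tensorTensorTensorComm_eq]
  rw [← ra.eq, ← rb.eq, TensorProduct.sum_tmul, map_sum, map_sum, map_sum]
  calc ∑ i ∈ ra.index, (LinearMap.mul' k H) ((TensorProduct.map (LinearMap.mul' k H)
        (LinearMap.mul' k H ∘ₗ TensorProduct.map 𝒮 𝒮 ∘ₗ (TensorProduct.comm k H H).toLinearMap))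
        ((TensorProduct.tensorTensorTensorComm k H H H H)
          ((ra.left i ⊗ₜ[k] ra.right i) ⊗ₜ[k] ∑ j ∈ rb.index, rb.left j ⊗ₜ[k] rb.right j)))
      = ∑ i ∈ ra.index, ∑ j ∈ rb.index,
          ra.left i * (rb.left j * (𝒮 (rb.right j) * 𝒮 (ra.right i))) := by
        refine Finset.sum_congr rfl fun i _ => ?_
        rw [TensorProduct.tmul_sum, map_sum, map_sum, map_sum]
        refine Finset.sum_congr rfl fun j _ => ?_
        simp [mul_assoc]
    _ = ∑ i ∈ ra.index,
          Coalgebra.counit (R := k) b • (ra.left i * 𝒮 (ra.right i)) := by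
        refine Finset.sum_congr rfl fun i _ => ?_
        calc ∑ j ∈ rb.index, ra.left i * (rb.left j * (𝒮 (rb.right j) * 𝒮 (ra.right i)))
            = ra.left i * ((∑ j ∈ rb.index, rb.left j * 𝒮 (rb.right j)) * 𝒮 (ra.right i)) := by
              rw [Finset.sum_mul, Finset.mul_sum]
              refine Finset.sum_congr rfl fun j _ => ?_
              rw [mul_assoc]
          _ = Coalgebra.counit (R := k) b • (ra.left i * 𝒮 (ra.right i)) := by
              rw [HopfAlgebra.sum_mul_antipode_eq_algebraMap_counit rb, Algebra.smul_def]
              rw [← mul_assoc, ← Algebra.commutes, mul_assoc]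
    _ = Coalgebra.counit (R := k) b • algebraMap k H (Coalgebra.counit (R := k) a) := by
        rw [← Finset.smul_sum, HopfAlgebra.sum_mul_antipode_eq_algebraMap_counit ra]
    _ = unitC (a ⊗ₜ[k] b) := by
        simp only [unitC, LinearMap.comp_apply, TensorProduct.counit_tmul,
          TensorProduct.map_tmul, LinearMap.mul'_apply, Algebra.smul_def, ← map_mul,
          Algebra.linearMap_apply]
        simp [mul_comm]

lemma antipode_one' : 𝒮 (1 : H) = 1 := by
  have h := HopfAlgebra.mul_antipode_rTensor_comul_apply (R := k) (A := H) 1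
  rw [Bialgebra.comul_one, Algebra.TensorProduct.one_def] at h
  simpa using h

lemma antipode_mul_anti (a b : H) : 𝒮 (a * b) = 𝒮 b * 𝒮 a := by
  have hFG : 𝒮 ∘ₗ LinearMap.mul' k H
      = LinearMap.mul' k H ∘ₗ TensorProduct.map 𝒮 𝒮 ∘ₗ (TensorProduct.comm k H H).toLinearMap := by
    calc 𝒮 ∘ₗ LinearMap.mul' k H = convP (𝒮 ∘ₗ LinearMap.mul' k H) unitC := (convP_unit_right _).symm
      _ = convP (𝒮 ∘ₗ LinearMap.mul' k H)
            (convP (LinearMap.mul' k H)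
              (LinearMap.mul' k H ∘ₗ TensorProduct.map 𝒮 𝒮 ∘ₗ (TensorProduct.comm k H H).toLinearMap)) := by
          rw [conv_mul_antipode]
      _ = convP (convP (𝒮 ∘ₗ LinearMap.mul' k H) (LinearMap.mul' k H))
            (LinearMap.mul' k H ∘ₗ TensorProduct.map 𝒮 𝒮 ∘ₗ (TensorProduct.comm k H H).toLinearMap) := by
          rw [convP_assoc]
      _ = convP unitC
            (LinearMap.mul' k H ∘ₗ TensorProduct.map 𝒮 𝒮 ∘ₗ (TensorProduct.comm k H H).toLinearMap) := by
          rw [conv_antipode_mul]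
      _ = _ := convP_unit_left _
  have := LinearMap.congr_fun hFG (a ⊗ₜ[k] b)
  simpa using this

lemma sum_sinv (Sinv : H →ₗ[k] H)
    (hS1 : (HopfAlgebra.antipode (R := k) (A := H)) ∘ₗ Sinv = LinearMap.id)
    (hS2 : Sinv ∘ₗ (HopfAlgebra.antipode (R := k) (A := H)) = LinearMap.id)
    {y : H} {ι : Type*} (r : Coalgebra.Repr k y ι) :
    ∑ i ∈ r.index, Sinv (r.right i) * r.left i = algebraMap k H (Coalgebra.counit (R := k) y) := by
  have hinj : Function.Injective 𝒮 := by
    intro u v huv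
    have h2u := LinearMap.congr_fun hS2 u
    have h2v := LinearMap.congr_fun hS2 v
    simp only [LinearMap.comp_apply, LinearMap.id_apply] at h2u h2v
    rw [← h2u, ← h2v, huv]
  apply hinj
  rw [map_sum]
  have hterm : ∀ i, 𝒮 (Sinv (r.right i) * r.left i) = 𝒮 (r.left i) * r.right i := by
    intro i
    rw [antipode_mul_anti]
    have := LinearMap.congr_fun hS1 (r.right i)
    simp only [LinearMap.comp_apply, LinearMap.id_apply] at this
    rw [this]
  rw [Finset.sum_congr rfl fun i _ => hterm i, HopfAlgebra.sum_antipode_mul_eq_algebraMap_counit r]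
  rw [Algebra.algebraMap_eq_smul_one, map_smul, antipode_one', ← Algebra.algebraMap_eq_smul_one]

/- ### Gadget maps -/

/-- `((p ⊗ q) ⊗ r) ⊗ d ↦ q ⊗ ((r * d) * S p)`. -/
def xiMap : ((H ⊗[k] H) ⊗[k] H) ⊗[k] H →ₗ[k] H ⊗[k] H :=
  LinearMap.lTensor H
      (LinearMap.mul' k H ∘ₗ (TensorProduct.comm k H H).toLinearMap ∘ₗ LinearMap.rTensor H 𝒮) ∘ₗ
    (TensorProduct.assoc k H H H).toLinearMap ∘ₗ
      TensorProduct.map (TensorProduct.comm k H H).toLinearMap (LinearMap.mul' k H) ∘ₗ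
        (TensorProduct.assoc k (H ⊗[k] H) H H).toLinearMap

@[simp] lemma xiMap_tmul (p q r d : H) :
    (xiMap : ((H ⊗[k] H) ⊗[k] H) ⊗[k] H →ₗ[k] H ⊗[k] H) (((p ⊗ₜ q) ⊗ₜ r) ⊗ₜ d)
      = q ⊗ₜ[k] ((r * d) * 𝒮 p) := by
  simp [xiMap]

/-- `p ⊗ q ↦ q ⊗ (c * S p)`. -/
def gMap (c : H) : H ⊗[k] H →ₗ[k] H ⊗[k] H :=
  LinearMap.lTensor H (LinearMap.mulLeft k c ∘ₗ 𝒮) ∘ₗ (TensorProduct.comm k H H).toLinearMap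

@[simp] lemma gMap_tmul (c p q : H) : gMap c (p ⊗ₜ q) = q ⊗ₜ[k] (c * 𝒮 p) := by
  simp [gMap]

lemma xiMap_mid (w : H ⊗[k] H) (c d : H) :
    (xiMap : ((H ⊗[k] H) ⊗[k] H) ⊗[k] H →ₗ[k] H ⊗[k] H) ((w ⊗ₜ c) ⊗ₜ d) = gMap (c * d) w := by
  induction w using TensorProduct.induction_on with
  | zero =>
    rw [TensorProduct.zero_tmul, TensorProduct.zero_tmul, LinearMap.map_zero, LinearMap.map_zero]
  | tmul p q => simp
  | add u v hu hv =>
    rw [TensorProduct.add_tmul, TensorProduct.add_tmul, LinearMap.map_add, hu, hv,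
      LinearMap.map_add]

/-- `u ⊗ c ↦ ξ(Δ₂ c ⊗ u)`, i.e. `∑ c² ⊗ (c³ * u) * S(c¹)`. -/
def gamMap : H ⊗[k] H →ₗ[k] H ⊗[k] H :=
  xiMap ∘ₗ (TensorProduct.comm k H ((H ⊗[k] H) ⊗[k] H)).toLinearMap ∘ₗ
    LinearMap.lTensor H (comul₂ k H)

lemma gamMap_tmul (u c : H) : gamMap (u ⊗ₜ c) = xiMap (comul₂ k H c ⊗ₜ u) := by
  simp [gamMap]

/-- `x₁ ⊗ (x₂ ⊗ x₃) ↦ g (x₃ * x₁) (Δ x₂)`. -/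
def tMap : H ⊗[k] (H ⊗[k] H) →ₗ[k] H ⊗[k] H :=
  xiMap ∘ₗ (TensorProduct.comm k H ((H ⊗[k] H) ⊗[k] H)).toLinearMap ∘ₗ
    LinearMap.lTensor H (LinearMap.rTensor H (Coalgebra.comul (R := k) (A := H)))

lemma tMap_tmul (x₁ x₂ x₃ : H) :
    tMap (x₁ ⊗ₜ (x₂ ⊗ₜ x₃)) = gMap (x₃ * x₁) (Coalgebra.comul (R := k) x₂) := by
  simp only [tMap, LinearMap.comp_apply, LinearMap.lTensor_tmul, LinearMap.rTensor_tmul,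
    LinearEquiv.coe_coe, TensorProduct.comm_tmul]
  exact xiMap_mid _ _ _

/-- `x₁ ⊗ (x₂ ⊗ x₃) ↦ x₃ ⊗ ((u * x₁) * S x₂)`. -/
def tpMap (u : H) : H ⊗[k] (H ⊗[k] H) →ₗ[k] H ⊗[k] H :=
  LinearMap.lTensor H (LinearMap.mul' k H) ∘ₗ (TensorProduct.assoc k H H H).toLinearMap ∘ₗ
    TensorProduct.map (LinearMap.lTensor H (LinearMap.mulLeft k u)) 𝒮 ∘ₗ
      LinearMap.rTensor H (TensorProduct.comm k H H).toLinearMap ∘ₗ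
        (TensorProduct.assoc k H H H).symm.toLinearMap ∘ₗ
          LinearMap.lTensor H (TensorProduct.comm k H H).toLinearMap

@[simp] lemma tpMap_tmul (u x₁ x₂ x₃ : H) :
    tpMap u (x₁ ⊗ₜ (x₂ ⊗ₜ x₃)) = x₃ ⊗ₜ[k] ((u * x₁) * 𝒮 x₂) := by
  simp [tpMap]

lemma tIns (u : H) {w : H} {ι : Type*} (s : Coalgebra.Repr k w ι) :
    ∑ j ∈ s.index, gMap (u * s.left j) (Coalgebra.comul (R := k) (s.right j)) = w ⊗ₜ[k] u := by
  have b₁ : ∀ j, Coalgebra.Repr k (s.left j) (H × H) := fun j => Coalgebra.Repr.arbitrary k (s.left j)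
  have b₂ : ∀ j, Coalgebra.Repr k (s.right j) (H × H) := fun j => Coalgebra.Repr.arbitrary k (s.right j)
  have key := Coalgebra.sum_tmul_tmul_eq (R := k) s b₁ b₂
  apply_fun tpMap u at key
  simp only [map_sum] at key
  calc ∑ j ∈ s.index, gMap (u * s.left j) (Coalgebra.comul (R := k) (s.right j))
      = ∑ j ∈ s.index, ∑ l ∈ (b₂ j).index,
          (b₂ j).right l ⊗ₜ[k] ((u * s.left j) * 𝒮 ((b₂ j).left l)) := by
        refine Finset.sum_congr rfl fun j _ => ?_
        rw [← (b₂ j).eq, map_sum]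
        simp
    _ = ∑ j ∈ s.index, ∑ l ∈ (b₂ j).index,
          tpMap u (s.left j ⊗ₜ ((b₂ j).left l ⊗ₜ (b₂ j).right l)) := by
        simp
    _ = ∑ j ∈ s.index, ∑ l ∈ (b₁ j).index,
          tpMap u ((b₁ j).left l ⊗ₜ ((b₁ j).right l ⊗ₜ s.right j)) := key.symm
    _ = ∑ j ∈ s.index,
          s.right j ⊗ₜ[k] (u * algebraMap k H (Coalgebra.counit (R := k) (s.left j))) := by
        refine Finset.sum_congr rfl fun j _ => ?_
        simp only [tpMap_tmul]
        rw [← TensorProduct.tmul_sum]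
        congr 1
        calc ∑ l ∈ (b₁ j).index, (u * (b₁ j).left l) * 𝒮 ((b₁ j).right l)
            = u * ∑ l ∈ (b₁ j).index, (b₁ j).left l * 𝒮 ((b₁ j).right l) := by
              rw [Finset.mul_sum]
              exact Finset.sum_congr rfl fun l _ => mul_assoc _ _ _
          _ = u * algebraMap k H (Coalgebra.counit (R := k) (s.left j)) := by
              rw [HopfAlgebra.sum_mul_antipode_eq_algebraMap_counit (b₁ j)]
    _ = (∑ j ∈ s.index, Coalgebra.counit (R := k) (s.left j) • s.right j) ⊗ₜ[k] u := by
        rw [TensorProduct.sum_tmul]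
        refine Finset.sum_congr rfl fun j _ => ?_
        rw [← Algebra.commutes, ← Algebra.smul_def, TensorProduct.tmul_smul,
          TensorProduct.smul_tmul']
    _ = w ⊗ₜ[k] u := by rw [aux_sum_counit_smul]

/-- The key Hopf-algebra identity: `∑ h³ ⊗ h⁴ h¹ S(h²) = Δ h`. -/
lemma hopf4 (v : H) : gamMap (Coalgebra.comul (R := k) v) = Coalgebra.comul (R := k) v := by
  have r := Coalgebra.Repr.arbitrary k v
  have a₁ : ∀ i, Coalgebra.Repr k (r.left i) (H × H) := fun i => Coalgebra.Repr.arbitrary k (r.left i)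
  have a₂ : ∀ i, Coalgebra.Repr k (r.right i) (H × H) := fun i => Coalgebra.Repr.arbitrary k (r.right i)
  have hcom2 : ∀ i, comul₂ k H (r.right i)
      = ∑ j ∈ (a₂ i).index,
          (Coalgebra.comul (R := k) ((a₂ i).left j)) ⊗ₜ[k] ((a₂ i).right j) := by
    intro i
    simp only [comul₂, LinearMap.comp_apply]
    rw [← (a₂ i).eq, map_sum]
    simp
  have key := Coalgebra.sum_tmul_tmul_eq (R := k) r a₁ a₂
  apply_fun tMap at key
  simp only [map_sum] at key
  calc gamMap (Coalgebra.comul (R := k) v)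
      = ∑ i ∈ r.index, xiMap (comul₂ k H (r.right i) ⊗ₜ r.left i) := by
        rw [← r.eq, map_sum]
        exact Finset.sum_congr rfl fun i _ => gamMap_tmul _ _
    _ = ∑ i ∈ r.index, ∑ j ∈ (a₂ i).index,
          gMap ((a₂ i).right j * r.left i) (Coalgebra.comul (R := k) ((a₂ i).left j)) := by
        refine Finset.sum_congr rfl fun i _ => ?_
        rw [hcom2 i, TensorProduct.sum_tmul, map_sum]
        exact Finset.sum_congr rfl fun j _ => xiMap_mid _ _ _
    _ = ∑ i ∈ r.index, ∑ j ∈ (a₂ i).index,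
          tMap (r.left i ⊗ₜ ((a₂ i).left j ⊗ₜ (a₂ i).right j)) := by
        refine Finset.sum_congr rfl fun i _ => Finset.sum_congr rfl fun j _ => ?_
        rw [tMap_tmul]
    _ = ∑ i ∈ r.index, ∑ j ∈ (a₁ i).index,
          tMap ((a₁ i).left j ⊗ₜ ((a₁ i).right j ⊗ₜ r.right i)) := key.symm
    _ = ∑ i ∈ r.index, ∑ j ∈ (a₁ i).index,
          gMap (r.right i * (a₁ i).left j) (Coalgebra.comul (R := k) ((a₁ i).right j)) := by
        refine Finset.sum_congr rfl fun i _ => Finset.sum_congr rfl fun j _ => ?_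
        rw [tMap_tmul]
    _ = ∑ i ∈ r.index, r.left i ⊗ₜ[k] r.right i := by
        refine Finset.sum_congr rfl fun i _ => ?_
        exact tIns (r.right i) (a₁ i)
    _ = Coalgebra.comul (R := k) v := r.eq

/- ### Module-side gadgets and lemmas -/

lemma exists_fin2 {A B : Type w} [AddCommGroup A] [Module k A] [AddCommGroup B] [Module k B]
    (x : A ⊗[k] B) : ∃ (n : ℕ) (a : Fin n → A) (b : Fin n → B), x = ∑ i, a i ⊗ₜ[k] b i := by
  induction x using TensorProduct.induction_on with
  | zero => exact ⟨0, Fin.elim0, Fin.elim0, by simp⟩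
  | tmul a b => exact ⟨1, fun _ => a, fun _ => b, by simp⟩
  | add u v hu hv =>
    obtain ⟨n, a, b, rfl⟩ := hu
    obtain ⟨n', a', b', rfl⟩ := hv
    refine ⟨n + n', Fin.append a a', Fin.append b b', ?_⟩
    rw [Fin.sum_univ_add]
    simp

lemma exists_fin3 {A B C : Type w} [AddCommGroup A] [Module k A] [AddCommGroup B] [Module k B]
    [AddCommGroup C] [Module k C] (x : (A ⊗[k] B) ⊗[k] C) :
    ∃ (n : ℕ) (a : Fin n → A) (b : Fin n → B) (c : Fin n → C),
      x = ∑ i, (a i ⊗ₜ b i) ⊗ₜ[k] c i := by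
  induction x using TensorProduct.induction_on with
  | zero => exact ⟨0, Fin.elim0, Fin.elim0, Fin.elim0, by simp⟩
  | tmul ab c =>
    obtain ⟨n, a, b, rfl⟩ := exists_fin2 ab
    exact ⟨n, a, b, fun _ => c, by rw [TensorProduct.sum_tmul]⟩
  | add u v hu hv =>
    obtain ⟨n, a, b, c, rfl⟩ := hu
    obtain ⟨n', a', b', c', rfl⟩ := hv
    refine ⟨n + n', Fin.append a a', Fin.append b b', Fin.append c c', ?_⟩
    rw [Fin.sum_univ_add]
    simp

@[simp] lemma actMap_tmul {N : Type w} [AddCommGroup N] [Module k N] [Module H N]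
    [SMulCommClass k H N] [IsScalarTower k H N] (h : H) (x : N) :
    actMap k H N (h ⊗ₜ x) = h • x := by
  simp [actMap, actBil, hSmulMap]

lemma sigma_apply (cM : RComod k H M) (z : M) :
    sigmaMap cM z = actMap k H M ((TensorProduct.comm k M H) (cM.ρ z)) := by
  simp [sigmaMap]

lemma sigma_rep (cM : RComod k H M) {m : M} {p : ℕ} {x : Fin p → M} {y : Fin p → H}
    (hxy : cM.ρ m = ∑ j, x j ⊗ₜ[k] y j) :
    sigmaMap cM m = ∑ j, y j • x j := by
  rw [sigma_apply, hxy, map_sum, map_sum]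
  simp

/-- `(p ⊗ q) ⊗ r ↦ r ⊗ (S p * q)`. -/
def lamMap : (H ⊗[k] H) ⊗[k] H →ₗ[k] H ⊗[k] H :=
  (TensorProduct.comm k H H).toLinearMap ∘ₗ
    TensorProduct.map (LinearMap.mul' k H ∘ₗ LinearMap.rTensor H 𝒮) LinearMap.id

lemma lamMap_tmul2 (w : H ⊗[k] H) (c : H) :
    lamMap (w ⊗ₜ c) = c ⊗ₜ[k] (LinearMap.mul' k H ((LinearMap.rTensor H 𝒮) w)) := by
  simp [lamMap]

@[simp] lemma lamMap_tmul (p q r : H) : lamMap ((p ⊗ₜ q) ⊗ₜ r) = r ⊗ₜ[k] (𝒮 p * q) := by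
  simp [lamMap]

lemma lamMap_comul₂ (h : H) : lamMap (comul₂ k H h) = h ⊗ₜ[k] (1 : H) := by
  have r := Coalgebra.Repr.arbitrary k h
  have : comul₂ k H h = ∑ i ∈ r.index,
      (Coalgebra.comul (R := k) (r.left i)) ⊗ₜ[k] (r.right i) := by
    simp only [comul₂, LinearMap.comp_apply]
    rw [← r.eq, map_sum]
    simp
  rw [this, map_sum]
  calc ∑ i ∈ r.index, lamMap (Coalgebra.comul (R := k) (r.left i) ⊗ₜ[k] r.right i)
      = ∑ i ∈ r.index,
          Coalgebra.counit (R := k) (r.left i) • (r.right i ⊗ₜ[k] (1 : H)) := by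
        refine Finset.sum_congr rfl fun i _ => ?_
        rw [lamMap_tmul2, mul_antipode_rTensor_comul_apply, Algebra.algebraMap_eq_smul_one,
          TensorProduct.tmul_smul]
    _ = (∑ i ∈ r.index, Coalgebra.counit (R := k) (r.left i) • r.right i) ⊗ₜ[k] (1 : H) := by
        rw [TensorProduct.sum_tmul]
        exact Finset.sum_congr rfl fun i _ => (TensorProduct.smul_tmul' _ _ _)
    _ = h ⊗ₜ[k] (1 : H) := by rw [aux_sum_counit_smul]

/-- `u ⊗ v ↦ (u * (y * v)) • x`. -/
def triMul (y : H) (x : M) : H ⊗[k] H →ₗ[k] M :=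
  TensorProduct.lift (LinearMap.mk₂ k (fun u v => (u * (y * v)) • x)
    (fun u u' v => by rw [add_mul, add_smul])
    (fun c u v => by rw [smul_mul_assoc, smul_assoc])
    (fun u v v' => by rw [mul_add, mul_add, add_smul])
    (fun c u v => by rw [mul_smul_comm, mul_smul_comm, smul_assoc]))

@[simp] lemma triMul_tmul (y : H) (x : M) (u v : H) :
    triMul y x (u ⊗ₜ[k] v) = (u * (y * v)) • x := by
  simp only [triMul, TensorProduct.lift.tmul, LinearMap.mk₂_apply]

/-- `x ⊗ (u ⊗ v) ↦ (u • x) ⊗ v`. -/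
def dMap : M ⊗[k] (H ⊗[k] H) →ₗ[k] M ⊗[k] H :=
  LinearMap.rTensor H (actMap k H M ∘ₗ (TensorProduct.comm k M H).toLinearMap) ∘ₗ
    (TensorProduct.assoc k M H H).symm.toLinearMap

@[simp] lemma dMap_tmul (x : M) (u v : H) : dMap (x ⊗ₜ (u ⊗ₜ v)) = (u • x) ⊗ₜ[k] v := by
  simp [dMap]

/-- `(x ⊗ u) ⊗ z ↦ dMap (x ⊗ ξ (z ⊗ u))`. -/
def ddMap : (M ⊗[k] H) ⊗[k] ((H ⊗[k] H) ⊗[k] H) →ₗ[k] M ⊗[k] H :=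
  dMap ∘ₗ LinearMap.lTensor M xiMap ∘ₗ
    LinearMap.lTensor M (TensorProduct.comm k H ((H ⊗[k] H) ⊗[k] H)).toLinearMap ∘ₗ
      (TensorProduct.assoc k M H ((H ⊗[k] H) ⊗[k] H)).toLinearMap

lemma ddMap_tmul (x : M) (u : H) (z : (H ⊗[k] H) ⊗[k] H) :
    ddMap ((x ⊗ₜ u) ⊗ₜ z) = dMap (x ⊗ₜ xiMap (z ⊗ₜ u)) := by
  simp [ddMap]

/-- `v ⊗ c ↦ ddMap (v ⊗ comul₂ c)`. -/
def psiMap : (M ⊗[k] H) ⊗[k] H →ₗ[k] M ⊗[k] H :=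
  ddMap ∘ₗ LinearMap.lTensor (M ⊗[k] H) (comul₂ k H)

lemma psiMap_tmul (v : M ⊗[k] H) (c : H) : psiMap (v ⊗ₜ c) = ddMap (v ⊗ₜ comul₂ k H c) := by
  simp [psiMap]

lemma psiMap_gam (x : M) (w : H ⊗[k] H) :
    psiMap ((TensorProduct.assoc k M H H).symm (x ⊗ₜ w)) = dMap (x ⊗ₜ gamMap w) := by
  induction w using TensorProduct.induction_on with
  | zero => rw [TensorProduct.tmul_zero, LinearMap.map_zero, map_zero, map_zero,
      TensorProduct.tmul_zero, LinearMap.map_zero]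
  | tmul u c =>
    rw [TensorProduct.assoc_symm_tmul, psiMap_tmul, ddMap_tmul, gamMap_tmul]
  | add w w' hw hw' =>
    rw [TensorProduct.tmul_add, map_add, map_add, map_add, TensorProduct.tmul_add, map_add,
      hw, hw']

/- ### The AYD key computation -/

lemma keyPt (cM : RComod k H M) (hM : IsAYD cM) (h : H) {n : ℕ} {h1 h2 h3 : Fin n → H}
    (hcom : comul₂ k H h = ∑ i, (h1 i ⊗ₜ[k] h2 i) ⊗ₜ[k] h3 i) (z : M) :
    cM.ρ (h • z) = ∑ i, (TensorProduct.map (hSmulMap k (h2 i))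
      (LinearMap.mulLeft k (h3 i) ∘ₗ LinearMap.mulRight k (𝒮 (h1 i)))) (cM.ρ z) := by
  obtain ⟨p, z0, z1, hz⟩ := exists_fin2 (cM.ρ z)
  rw [hM h z n p h1 h2 h3 z0 z1 hcom hz, hz]
  refine Finset.sum_congr rfl fun i _ => ?_
  rw [map_sum]
  refine Finset.sum_congr rfl fun j _ => ?_
  simp [hSmulMap, mul_assoc]

lemma sumP_eq_psi {n : ℕ} {h1 h2 h3 : Fin n → H} {c : H}
    (hcom : comul₂ k H c = ∑ i, (h1 i ⊗ₜ[k] h2 i) ⊗ₜ[k] h3 i) (v : M ⊗[k] H) :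
    ∑ i, (TensorProduct.map (hSmulMap k (h2 i))
      (LinearMap.mulLeft k (h3 i) ∘ₗ LinearMap.mulRight k (𝒮 (h1 i)))) v
    = psiMap (v ⊗ₜ c) := by
  induction v using TensorProduct.induction_on with
  | zero =>
    rw [TensorProduct.zero_tmul, LinearMap.map_zero]
    simp
  | tmul x u =>
    rw [psiMap_tmul, ddMap_tmul, hcom, TensorProduct.sum_tmul, map_sum, TensorProduct.tmul_sum,
      map_sum]
    refine Finset.sum_congr rfl fun i _ => ?_
    simp [hSmulMap, mul_assoc]
  | add v v' hv hv' =>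
    rw [TensorProduct.add_tmul, LinearMap.map_add, ← hv, ← hv', ← Finset.sum_add_distrib]
    refine Finset.sum_congr rfl fun i _ => ?_
    rw [LinearMap.map_add]

lemma dMap_assoc (v : M ⊗[k] H) (c : H) :
    dMap ((TensorProduct.assoc k M H H) (v ⊗ₜ c))
      = (actMap k H M ((TensorProduct.comm k M H) v)) ⊗ₜ[k] c := by
  induction v using TensorProduct.induction_on with
  | zero => simp [TensorProduct.zero_tmul]
  | tmul x u => simp
  | add v v' hv hv' =>
    simp only [TensorProduct.add_tmul, map_add, hv, hv']

lemma comod_coassoc (cM : RComod k H M) {m : M} {p : ℕ} {x : Fin p → M} {y : Fin p → H}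
    (hxy : cM.ρ m = ∑ j, x j ⊗ₜ[k] y j) :
    ∑ j, (TensorProduct.assoc k M H H) (cM.ρ (x j) ⊗ₜ[k] y j)
      = ∑ j, x j ⊗ₜ[k] (Coalgebra.comul (R := k) (y j)) := by
  have h := LinearMap.congr_fun cM.coassoc m
  simp only [LinearMap.comp_apply, LinearEquiv.coe_coe] at h
  rw [hxy, map_sum, map_sum, map_sum] at h
  simp only [LinearMap.rTensor_tmul, LinearMap.lTensor_tmul] at h
  exact h

lemma comod_counit (cM : RComod k H M) {m : M} {p : ℕ} {x : Fin p → M} {y : Fin p → H}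
    (hxy : cM.ρ m = ∑ j, x j ⊗ₜ[k] y j) :
    ∑ j, Coalgebra.counit (R := k) (y j) • x j = m := by
  have h := LinearMap.congr_fun cM.counit_id m
  simp only [LinearMap.comp_apply, LinearEquiv.coe_coe, LinearMap.id_apply] at h
  rw [hxy, map_sum, map_sum] at h
  simp only [LinearMap.lTensor_tmul, TensorProduct.rid_tmul] at h
  exact h

/- ### Part (B): σ is an `H`-module map -/

lemma sigma_modHom (cM : RComod k H M) (hM : IsAYD cM) (h : H) (m : M) :
    sigmaMap cM (h • m) = h • sigmaMap cM m := by
  obtain ⟨n, h1, h2, h3, hcom⟩ := exists_fin3 (comul₂ k H h)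
  obtain ⟨p, x, y, hxy⟩ := exists_fin2 (cM.ρ m)
  have key2 : ∑ i, h3 i ⊗ₜ[k] (𝒮 (h1 i) * h2 i) = h ⊗ₜ[k] (1 : H) := by
    have h' := congrArg lamMap hcom
    rw [lamMap_comul₂, map_sum] at h'
    simp only [lamMap_tmul] at h'
    exact h'.symm
  rw [sigma_apply, keyPt cM hM h hcom m, hxy]
  rw [map_sum, map_sum]
  calc ∑ i, actMap k H M ((TensorProduct.comm k M H)
        ((TensorProduct.map (hSmulMap k (h2 i))
          (LinearMap.mulLeft k (h3 i) ∘ₗ LinearMap.mulRight k (𝒮 (h1 i))))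
          (∑ j, x j ⊗ₜ[k] y j)))
      = ∑ i, ∑ j, ((h3 i * (y j * 𝒮 (h1 i))) * h2 i) • x j := by
        refine Finset.sum_congr rfl fun i _ => ?_
        rw [map_sum, map_sum, map_sum]
        refine Finset.sum_congr rfl fun j _ => ?_
        simp [hSmulMap, mul_smul]
    _ = ∑ j, ∑ i, (h3 i * (y j * (𝒮 (h1 i) * h2 i))) • x j := by
        rw [Finset.sum_comm]
        exact Finset.sum_congr rfl fun j _ => Finset.sum_congr rfl fun i _ => by
          rw [mul_assoc, mul_assoc]
    _ = ∑ j, triMul (y j) (x j) (∑ i, h3 i ⊗ₜ[k] (𝒮 (h1 i) * h2 i)) := by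
        refine Finset.sum_congr rfl fun j _ => ?_
        rw [map_sum]
        simp
    _ = ∑ j, (h * (y j * 1)) • x j := by
        refine Finset.sum_congr rfl fun j _ => ?_
        rw [key2, triMul_tmul]
    _ = h • sigmaMap cM m := by
        rw [sigma_rep cM hxy, Finset.smul_sum]
        refine Finset.sum_congr rfl fun j _ => ?_
        rw [mul_one, mul_smul]

/- ### Part (C): σ is an `H`-comodule map -/

lemma sigma_comodHom (cM : RComod k H M) (hM : IsAYD cM) :
    IsComodHom cM.ρ cM.ρ (sigmaMap cM) := by
  refine LinearMap.ext fun m => ?_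
  simp only [LinearMap.comp_apply]
  obtain ⟨p, x, y, hxy⟩ := exists_fin2 (cM.ρ m)
  choose n h1 h2 h3 hcom using fun j => exists_fin3 (comul₂ k H (y j))
  have e1 := comod_coassoc cM hxy
  calc cM.ρ (sigmaMap cM m)
      = ∑ j, cM.ρ (y j • x j) := by rw [sigma_rep cM hxy, map_sum]
    _ = ∑ j, psiMap (cM.ρ (x j) ⊗ₜ[k] y j) := by
        refine Finset.sum_congr rfl fun j _ => ?_
        rw [keyPt cM hM (y j) (hcom j) (x j), sumP_eq_psi (hcom j)]
    _ = psiMap ((TensorProduct.assoc k M H H).symm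
          (∑ j, x j ⊗ₜ[k] (Coalgebra.comul (R := k) (y j)))) := by
        rw [← e1, map_sum, map_sum]
        simp only [LinearEquiv.symm_apply_apply]
    _ = ∑ j, dMap (x j ⊗ₜ[k] gamMap (Coalgebra.comul (R := k) (y j))) := by
        rw [map_sum, map_sum]
        exact Finset.sum_congr rfl fun j _ => psiMap_gam _ _
    _ = ∑ j, dMap (x j ⊗ₜ[k] (Coalgebra.comul (R := k) (y j))) := by
        refine Finset.sum_congr rfl fun j _ => ?_
        rw [hopf4]
    _ = ∑ j, dMap ((TensorProduct.assoc k M H H) (cM.ρ (x j) ⊗ₜ[k] y j)) := by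
        rw [← map_sum, ← e1, map_sum]
    _ = ∑ j, sigmaMap cM (x j) ⊗ₜ[k] y j := by
        refine Finset.sum_congr rfl fun j _ => ?_
        rw [dMap_assoc, ← sigma_apply]
    _ = (LinearMap.rTensor H (sigmaMap cM)) (cM.ρ m) := by
        rw [hxy, map_sum]
        simp

/- ### Part (A): σ is invertible with inverse `m ↦ S⁻¹(m₁) • m₀` -/

lemma sigmaInv_rep (Sinv : H →ₗ[k] H) (cM : RComod k H M) {m : M} {p : ℕ} {x : Fin p → M}
    {y : Fin p → H} (hxy : cM.ρ m = ∑ j, x j ⊗ₜ[k] y j) :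
    sigmaInvMap Sinv cM m = ∑ j, Sinv (y j) • x j := by
  simp only [sigmaInvMap, LinearMap.comp_apply, LinearEquiv.coe_coe]
  rw [hxy, map_sum, map_sum, map_sum]
  simp

/-- `x ⊗ (u ⊗ v) ↦ (Sinv v * u) • x`. -/
def eMap (Sinv : H →ₗ[k] H) : M ⊗[k] (H ⊗[k] H) →ₗ[k] M :=
  actMap k H M ∘ₗ (TensorProduct.comm k M H).toLinearMap ∘ₗ
    LinearMap.lTensor M (LinearMap.mul' k H ∘ₗ TensorProduct.map Sinv LinearMap.id ∘ₗ
      (TensorProduct.comm k H H).toLinearMap)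

lemma eMap_tmul2 (Sinv : H →ₗ[k] H) (x : M) (w : H ⊗[k] H) :
    eMap Sinv (x ⊗ₜ w) = (LinearMap.mul' k H ((TensorProduct.map Sinv LinearMap.id)
      ((TensorProduct.comm k H H) w))) • x := by
  simp [eMap]

@[simp] lemma eMap_tmul (Sinv : H →ₗ[k] H) (x : M) (u v : H) :
    eMap Sinv (x ⊗ₜ (u ⊗ₜ v)) = (Sinv v * u) • x := by
  simp [eMap]

lemma core_inv (Sinv : H →ₗ[k] H)
    (hS1 : (HopfAlgebra.antipode (R := k) (A := H)) ∘ₗ Sinv = LinearMap.id)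
    (hS2 : Sinv ∘ₗ (HopfAlgebra.antipode (R := k) (A := H)) = LinearMap.id)
    (cM : RComod k H M) {m : M} {p : ℕ} {x : Fin p → M} {y : Fin p → H}
    (hxy : cM.ρ m = ∑ j, x j ⊗ₜ[k] y j) :
    ∑ j, Sinv (y j) • sigmaMap cM (x j) = m := by
  have step : ∀ (v : M ⊗[k] H) (c : H),
      eMap Sinv ((TensorProduct.assoc k M H H) (v ⊗ₜ c))
        = Sinv c • (actMap k H M ((TensorProduct.comm k M H) v)) := by
    intro v c
    induction v using TensorProduct.induction_on with
    | zero => simp [TensorProduct.zero_tmul]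
    | tmul a u => simp [mul_smul]
    | add v v' hv hv' =>
      simp only [TensorProduct.add_tmul, map_add, hv, hv', smul_add]
  have e1 := comod_coassoc cM hxy
  calc ∑ j, Sinv (y j) • sigmaMap cM (x j)
      = ∑ j, eMap Sinv ((TensorProduct.assoc k M H H) (cM.ρ (x j) ⊗ₜ[k] y j)) := by
        refine Finset.sum_congr rfl fun j _ => ?_
        rw [step, ← sigma_apply]
    _ = ∑ j, eMap Sinv (x j ⊗ₜ[k] (Coalgebra.comul (R := k) (y j))) := by
        rw [← map_sum, e1, map_sum]
    _ = ∑ j, Coalgebra.counit (R := k) (y j) • x j := by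
        refine Finset.sum_congr rfl fun j _ => ?_
        rw [eMap_tmul2]
        have r := Coalgebra.Repr.arbitrary k (y j)
        rw [← r.eq, map_sum, map_sum, map_sum]
        simp only [TensorProduct.comm_tmul, TensorProduct.map_tmul, LinearMap.mul'_apply,
          LinearMap.id_coe, id_eq]
        rw [sum_sinv Sinv hS1 hS2 r, algebraMap_smul]
    _ = m := comod_counit cM hxy

lemma sigma_inv_right (Sinv : H →ₗ[k] H)
    (hS1 : (HopfAlgebra.antipode (R := k) (A := H)) ∘ₗ Sinv = LinearMap.id)
    (hS2 : Sinv ∘ₗ (HopfAlgebra.antipode (R := k) (A := H)) = LinearMap.id)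
    (cM : RComod k H M) (hM : IsAYD cM) :
    sigmaMap cM ∘ₗ sigmaInvMap Sinv cM = LinearMap.id := by
  refine LinearMap.ext fun m => ?_
  obtain ⟨p, x, y, hxy⟩ := exists_fin2 (cM.ρ m)
  simp only [LinearMap.comp_apply, LinearMap.id_apply]
  rw [sigmaInv_rep Sinv cM hxy, map_sum]
  calc ∑ j, sigmaMap cM (Sinv (y j) • x j)
      = ∑ j, Sinv (y j) • sigmaMap cM (x j) :=
        Finset.sum_congr rfl fun j _ => sigma_modHom cM hM _ _
    _ = m := core_inv Sinv hS1 hS2 cM hxy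

lemma sigma_inv_left (Sinv : H →ₗ[k] H)
    (hS1 : (HopfAlgebra.antipode (R := k) (A := H)) ∘ₗ Sinv = LinearMap.id)
    (hS2 : Sinv ∘ₗ (HopfAlgebra.antipode (R := k) (A := H)) = LinearMap.id)
    (cM : RComod k H M) (hM : IsAYD cM) :
    sigmaInvMap Sinv cM ∘ₗ sigmaMap cM = LinearMap.id := by
  refine LinearMap.ext fun m => ?_
  obtain ⟨p, x, y, hxy⟩ := exists_fin2 (cM.ρ m)
  simp only [LinearMap.comp_apply, LinearMap.id_apply]
  have hρσ : cM.ρ (sigmaMap cM m) = ∑ j, sigmaMap cM (x j) ⊗ₜ[k] y j := by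
    have h := LinearMap.congr_fun (sigma_comodHom cM hM) m
    simp only [LinearMap.comp_apply] at h
    rw [h, hxy, map_sum]
    simp
  rw [sigmaInv_rep Sinv cM hρσ]
  exact core_inv Sinv hS1 hS2 cM hxy

/- ### Part (D): naturality -/

lemma naturality (cM : RComod k H M) (cM' : RComod k H M') (θ : M →ₗ[k] M')
    (hmod : ∀ (h : H) (m : M), θ (h • m) = h • θ m)
    (hco : IsComodHom cM.ρ cM'.ρ θ) :
    θ ∘ₗ sigmaMap cM = sigmaMap cM' ∘ₗ θ := by
  refine LinearMap.ext fun m => ?_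
  obtain ⟨p, x, y, hxy⟩ := exists_fin2 (cM.ρ m)
  have hρ' : cM'.ρ (θ m) = ∑ j, θ (x j) ⊗ₜ[k] y j := by
    have h := LinearMap.congr_fun hco m
    simp only [LinearMap.comp_apply] at h
    rw [h, hxy, map_sum]
    simp
  simp only [LinearMap.comp_apply]
  rw [sigma_rep cM hxy, map_sum]
  have hσ' : sigmaMap cM' (θ m) = ∑ j, y j • θ (x j) := by
    simp only [sigmaMap, LinearMap.comp_apply, LinearEquiv.coe_coe]
    rw [hρ', map_sum, map_sum]
    simp
  rw [hσ']
  exact Finset.sum_congr rfl fun j _ => hmod _ _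

end AYDAux

/-- for an anti-Yetter-Drinfeld module `M`, `σ_M : m ↦ m₁m₀` is an
`H`-module and `H`-comodule automorphism of `M` with inverse `m ↦ S⁻¹(m₁)m₀`, and is
natural in `M` with respect to morphisms of anti-Yetter-Drinfeld modules. -/
theorem stmt9 (Sinv : H →ₗ[k] H)
    (hS1 : (HopfAlgebra.antipode (R := k) (A := H)) ∘ₗ Sinv = LinearMap.id)
    (hS2 : Sinv ∘ₗ (HopfAlgebra.antipode (R := k) (A := H)) = LinearMap.id)
    (cM : RComod k H M) (hM : IsAYD cM) (cM' : RComod k H M') (hM' : IsAYD cM') :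
    (sigmaMap cM ∘ₗ sigmaInvMap Sinv cM = LinearMap.id ∧
     sigmaInvMap Sinv cM ∘ₗ sigmaMap cM = LinearMap.id) ∧
    (∀ (h : H) (m : M), sigmaMap cM (h • m) = h • sigmaMap cM m) ∧
    IsComodHom cM.ρ cM.ρ (sigmaMap cM) ∧
    (∀ θ : M →ₗ[k] M', (∀ (h : H) (m : M), θ (h • m) = h • θ m) →
      IsComodHom cM.ρ cM'.ρ θ → θ ∘ₗ sigmaMap cM = sigmaMap cM' ∘ₗ θ) := by
  exact ⟨⟨sigma_inv_right Sinv hS1 hS2 cM hM, sigma_inv_left Sinv hS1 hS2 cM hM⟩,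
    fun h m => sigma_modHom cM hM h m,
    sigma_comodHom cM hM,
    fun θ hmod hco => naturality cM cM' θ hmod hco⟩

end Statement9
end

section
/- Let C = ⊕_{i∈I} C_i be a coalgebra over a field that is a direct sum of finite-dimensional subcoalgebras C_i with counits ε_i. For a right C-contramodule (M, α), set α_i(m) = α(ε_i(−)m) and M_i = α_i(M). Then α_i ∘ α_j = δ_{ij} α_i, and the map β: M → ∏_i M_i, m ↦ (α_i(m))_i, is a bijection. -/
open TensorProduct LinearMap

noncomputable section Statement13
open TensorProduct LinearMap

universe w
variable {k C : Type w} [Field k] [AddCommGroup C] [Module k C] [Coalgebra k C]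

theorem aux13_key {ι : Type w} (Ci : ι → Submodule k C)
    (hsupr : ⨆ i, Ci i = ⊤)
    (hsubcoalg : ∀ i, ∀ x ∈ Ci i, Coalgebra.comul (R := k) (A := C) x ∈
      LinearMap.range (TensorProduct.map (Ci i).subtype (Ci i).subtype))
    (εi : ι → (C →ₗ[k] k))
    (hεi_on : ∀ i, ∀ x ∈ Ci i, εi i x = Coalgebra.counit (R := k) (A := C) x)
    (hεi_off : ∀ i j, i ≠ j → ∀ x ∈ Ci j, εi i x = 0)
    {M : Type w} [AddCommGroup M] [Module k M]
    (i : ι) (F : C →ₗ[k] M) (m₀ : M)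
    (hF : ∀ y ∈ Ci i, F y = Coalgebra.counit (R := k) (A := C) y • m₀) :
    (TensorProduct.lift ((εi i).smulRight F)) ∘ₗ Coalgebra.comul (R := k) (A := C)
      = (εi i).smulRight m₀ := by
  have hp : ∀ j, ∀ x ∈ Ci j,
      TensorProduct.lift ((εi i).smulRight F) (Coalgebra.comul (R := k) (A := C) x)
        = εi i x • m₀ := by
    intro j x hx
    obtain ⟨t, ht⟩ := hsubcoalg j x hx
    rw [← ht]
    by_cases hij : j = i
    · subst hij
      set K : C ⊗[k] C →ₗ[k] M :=
        ((Coalgebra.counit (R := k) (A := C)).smulRight m₀) ∘ₗ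
          (TensorProduct.lid k C).toLinearMap ∘ₗ
          (Coalgebra.counit (R := k) (A := C)).rTensor C with hK
      have hmap : (TensorProduct.lift ((εi j).smulRight F)) ∘ₗ
          TensorProduct.map (Ci j).subtype (Ci j).subtype
          = K ∘ₗ TensorProduct.map (Ci j).subtype (Ci j).subtype := by
        apply TensorProduct.ext'
        intro a b
        simp [hK, hεi_on j a.1 a.2, hF b.1 b.2, smul_smul, mul_comm]
      calc TensorProduct.lift ((εi j).smulRight F)
            (TensorProduct.map (Ci j).subtype (Ci j).subtype t)
          = K (TensorProduct.map (Ci j).subtype (Ci j).subtype t) :=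
            LinearMap.congr_fun hmap t
        _ = K (Coalgebra.comul (R := k) (A := C) x) := by rw [ht]
        _ = εi j x • m₀ := by
            simp [hK, Coalgebra.rTensor_counit_comul, hεi_on j x hx]
    · have hmap : (TensorProduct.lift ((εi i).smulRight F)) ∘ₗ
          TensorProduct.map (Ci j).subtype (Ci j).subtype = 0 := by
        apply TensorProduct.ext'
        intro a b
        simp [hεi_off i j (fun h => hij h.symm) a.1 a.2]
      rw [hεi_off i j (fun h => hij h.symm) x hx, zero_smul]
      exact LinearMap.congr_fun hmap t
  ext c
  simp only [coe_comp, Function.comp_apply, smulRight_apply]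
  have hc : c ∈ ⨆ j, Ci j := by rw [hsupr]; trivial
  exact Submodule.iSup_induction (motive := fun c =>
      TensorProduct.lift ((εi i).smulRight F) (Coalgebra.comul (R := k) (A := C) c)
        = εi i c • m₀) Ci hc hp (by simp)
    (fun x y hx hy => by simp only [map_add, hx, hy, add_smul])

/-- if `C = ⊕ᵢ Cᵢ` is a direct sum of finite-dimensional subcoalgebras with
counits `εᵢ`, then for a right `C`-contramodule `(M, α)`, setting `αᵢ(m) = α(εᵢ(−)m)` and
`Mᵢ = αᵢ(M)`, one has `αᵢ ∘ αⱼ = δᵢⱼ αᵢ` and `m ↦ (αᵢ(m))ᵢ` is a bijection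
`M ≅ ∏ᵢ Mᵢ`. -/
theorem stmt13 {ι : Type w} [DecidableEq ι] (Ci : ι → Submodule k C)
    (hinternal : DirectSum.IsInternal Ci)
    (hfd : ∀ i, FiniteDimensional k ↥(Ci i))
    (hsubcoalg : ∀ i, ∀ x ∈ Ci i, Coalgebra.comul (R := k) (A := C) x ∈
      LinearMap.range (TensorProduct.map (Ci i).subtype (Ci i).subtype))
    (εi : ι → (C →ₗ[k] k))
    (hεi_on : ∀ i, ∀ x ∈ Ci i, εi i x = Coalgebra.counit (R := k) (A := C) x)
    (hεi_off : ∀ i j, i ≠ j → ∀ x ∈ Ci j, εi i x = 0)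
    {M : Type w} [AddCommGroup M] [Module k M] (Cm : RContramod k C M) :
    (∀ (i : ι) (m : M), Cm.α ((εi i).smulRight (Cm.α ((εi i).smulRight m)))
        = Cm.α ((εi i).smulRight m)) ∧
    (∀ (i j : ι), i ≠ j → ∀ m : M,
        Cm.α ((εi i).smulRight (Cm.α ((εi j).smulRight m))) = 0) ∧
    Function.Bijective (fun (m : M) (i : ι) =>
      (⟨Cm.α ((εi i).smulRight m), Set.mem_range_self m⟩ :
        Set.range (fun m : M => Cm.α ((εi i).smulRight m)))) := by
  classical
  have hsupr : ⨆ i, Ci i = ⊤ := hinternal.submodule_iSup_eq_top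
  -- curry of lift
  have hcurry : ∀ B : C →ₗ[k] (C →ₗ[k] M), TensorProduct.curry (TensorProduct.lift B) = B := by
    intro B; ext x y; simp
  -- α composed with a smulRight bilinear map
  have hcomp : ∀ (l : C →ₗ[k] k) (g : C →ₗ[k] M),
      Cm.α ∘ₗ (l.smulRight g) = l.smulRight (Cm.α g) := by
    intro l g; ext x; simp
  -- the main contraassoc computation
  have hmain : ∀ (i : ι) (F : C →ₗ[k] M) (m₀ : M),
      (∀ y ∈ Ci i, F y = Coalgebra.counit (R := k) (A := C) y • m₀) →
      Cm.α ((εi i).smulRight (Cm.α F)) = Cm.α ((εi i).smulRight m₀) := by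
    intro i F m₀ hF
    have h1 := Cm.contraassoc (TensorProduct.lift ((εi i).smulRight F))
    rw [hcurry, hcomp, aux13_key Ci hsupr hsubcoalg εi hεi_on hεi_off i F m₀ hF] at h1
    exact h1
  -- Part 1: idempotence
  have hidem : ∀ (i : ι) (m : M), Cm.α ((εi i).smulRight (Cm.α ((εi i).smulRight m)))
      = Cm.α ((εi i).smulRight m) := by
    intro i m
    exact hmain i ((εi i).smulRight m) m (fun y hy => by simp [hεi_on i y hy])
  -- Part 2: orthogonality
  have horth : ∀ (i j : ι), i ≠ j → ∀ m : M,
      Cm.α ((εi i).smulRight (Cm.α ((εi j).smulRight m))) = 0 := by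
    intro i j hij m
    have := hmain i ((εi j).smulRight m) 0
      (fun y hy => by simp [hεi_off j i (fun h => hij h.symm) y hy])
    simpa using this
  refine ⟨hidem, horth, ?_⟩
  -- the direct sum equivalence
  have hbij : Function.Bijective (DirectSum.coeLinearMap Ci) := hinternal
  set e : DirectSum ι (fun i => ↥(Ci i)) ≃ₗ[k] C :=
    LinearEquiv.ofBijective (DirectSum.coeLinearMap Ci) hbij with he
  have hesymm : ∀ (j : ι) (x : C) (hx : x ∈ Ci j),
      e.symm x = DirectSum.lof k ι (fun i => ↥(Ci i)) j ⟨x, hx⟩ := by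
    intro j x hx
    rw [LinearEquiv.symm_apply_eq, he, LinearEquiv.ofBijective_apply, DirectSum.lof_eq_of,
      DirectSum.coeLinearMap_of]
  -- the family map
  set Fam : (ι → M) → (C →ₗ[k] M) := fun μ =>
    (DirectSum.toModule k ι M (fun j => ((εi j) ∘ₗ (Ci j).subtype).smulRight (μ j))) ∘ₗ
      e.symm.toLinearMap with hFamdef
  have hFam : ∀ (μ : ι → M) (j : ι) (x : C), x ∈ Ci j → Fam μ x = εi j x • μ j := by
    intro μ j x hx
    simp [hFamdef, hesymm j x hx, DirectSum.toModule_lof]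
  -- left inverse computation : α (Fam (α_i m)) = m
  have hleft : ∀ m : M, Cm.α (Fam (fun j => Cm.α ((εi j).smulRight m))) = m := by
    intro m
    set W : C →ₗ[k] (C →ₗ[k] M) :=
      (DirectSum.toModule k ι (C →ₗ[k] M)
        (fun j => ((εi j) ∘ₗ (Ci j).subtype).smulRight ((εi j).smulRight m))) ∘ₗ
        e.symm.toLinearMap with hWdef
    have hW : ∀ (j : ι) (x : C), x ∈ Ci j → W x = εi j x • ((εi j).smulRight m) := by
      intro j x hx
      simp [hWdef, hesymm j x hx, DirectSum.toModule_lof]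
    have hextCM : ∀ (f g : C →ₗ[k] M), (∀ j, ∀ x ∈ Ci j, f x = g x) → f = g := by
      intro f g h
      ext c
      have hc : c ∈ ⨆ j, Ci j := by rw [hsupr]; trivial
      exact Submodule.iSup_induction (motive := fun c => f c = g c) Ci hc h (by simp)
        (fun x y hx hy => by simp only [map_add, hx, hy])
    have h1 := Cm.contraassoc (TensorProduct.lift W)
    rw [hcurry] at h1
    have h2 : Cm.α ∘ₗ W = Fam (fun j => Cm.α ((εi j).smulRight m)) := by
      apply hextCM
      intro j x hx
      rw [coe_comp, Function.comp_apply, hW j x hx, map_smul, hFam _ j x hx]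
    have h3 : TensorProduct.lift W ∘ₗ Coalgebra.comul (R := k) (A := C)
        = (Coalgebra.counit (R := k) (A := C)).smulRight m := by
      apply hextCM
      intro j x hx
      obtain ⟨t, ht⟩ := hsubcoalg j x hx
      set K : C ⊗[k] C →ₗ[k] M :=
        ((Coalgebra.counit (R := k) (A := C)).smulRight m) ∘ₗ
          (TensorProduct.lid k C).toLinearMap ∘ₗ
          (Coalgebra.counit (R := k) (A := C)).rTensor C with hK
      have hmap : (TensorProduct.lift W) ∘ₗ
          TensorProduct.map (Ci j).subtype (Ci j).subtype
          = K ∘ₗ TensorProduct.map (Ci j).subtype (Ci j).subtype := by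
        apply TensorProduct.ext'
        intro a b
        simp [hK, hW j a.1 a.2, hεi_on j a.1 a.2, hεi_on j b.1 b.2, smul_smul, mul_comm]
      calc (TensorProduct.lift W ∘ₗ Coalgebra.comul (R := k) (A := C)) x
          = TensorProduct.lift W (TensorProduct.map (Ci j).subtype (Ci j).subtype t) := by
            rw [coe_comp, Function.comp_apply, ← ht]
        _ = K (TensorProduct.map (Ci j).subtype (Ci j).subtype t) :=
            LinearMap.congr_fun hmap t
        _ = K (Coalgebra.comul (R := k) (A := C) x) := by rw [ht]
        _ = ((Coalgebra.counit (R := k) (A := C)).smulRight m) x := by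
            simp [hK, Coalgebra.rTensor_counit_comul]
    rw [h2, h3] at h1
    rw [h1, Cm.counit_id]
  -- right inverse computation
  have hright : ∀ (μ : ι → M) (i : ι), Cm.α ((εi i).smulRight (μ i)) = μ i →
      Cm.α ((εi i).smulRight (Cm.α (Fam μ))) = μ i := by
    intro μ i hfix
    have := hmain i (Fam μ) (μ i)
      (fun y hy => by rw [hFam μ i y hy, hεi_on i y hy])
    rw [this, hfix]
  rw [Function.bijective_iff_has_inverse]
  refine ⟨fun v => Cm.α (Fam (fun j => (v j : M))), fun m => hleft m, fun v => ?_⟩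
  funext i
  apply Subtype.ext
  obtain ⟨w, hw⟩ := (v i).2
  refine hright (fun j => (v j : M)) i ?_
  show Cm.α ((εi i).smulRight (v i : M)) = (v i : M)
  rw [← hw]; exact hidem i w


end Statement13
end

section
/- Let G be a group with group Hopf algebra kG (Δ(g) = g⊗g, ε(g) = 1). A right kG-contramodule (M, α) is equivalent to the data of a family of subspaces (M_g)_{g∈G} with M ≅ ∏_{g∈G} M_g via m ↦ (α(δ_g(−)m))_g, where δ_g(x) = 1 if x = g and 0 for other group elements; i.e., the category of kG-contramodules is equivalent to the category of G-graded vector spaces of product type ∏_g M_g. -/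
open TensorProduct LinearMap

noncomputable section Statement15
open TensorProduct LinearMap

universe w
variable (k : Type w) (G : Type w) [Field k] [Group G]

/-- The comultiplication of the group coalgebra `kG`: `Δ(g) = g ⊗ g`. -/
def comulG : (G →₀ k) →ₗ[k] (G →₀ k) ⊗[k] (G →₀ k) :=
  Finsupp.lsum k fun g => LinearMap.toSpanSingleton k _
    (Finsupp.single g (1 : k) ⊗ₜ[k] Finsupp.single g (1 : k))

/-- The counit of the group coalgebra `kG`: `ε(g) = 1`. -/
def counitG : (G →₀ k) →ₗ[k] k :=
  Finsupp.lsum k fun _ => LinearMap.id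

variable {k G}

/-- A right `kG`-contramodule structure on `M`. -/
structure KGContramod (M : Type w) [AddCommGroup M] [Module k M] where
  α : ((G →₀ k) →ₗ[k] M) →ₗ[k] M
  contraassoc : ∀ f : (G →₀ k) ⊗[k] (G →₀ k) →ₗ[k] M,
      α (α ∘ₗ (TensorProduct.curry f)) = α (f ∘ₗ comulG k G)
  counit_id : ∀ m : M, α ((counitG k G).smulRight m) = m

lemma keyA {M : Type w} [AddCommGroup M] [Module k M] (Cm : KGContramod (k := k) (G := G) M)
    (g : G) (F : (G →₀ k) →ₗ[k] M) :
    Cm.α ((Finsupp.lapply g).smulRight (Cm.α F)) =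
      Cm.α ((Finsupp.lapply g).smulRight (F (Finsupp.single g 1))) := by
  have h := Cm.contraassoc (TensorProduct.lift ((Finsupp.lapply g).smulRight F))
  have h1 : Cm.α ∘ₗ TensorProduct.curry (TensorProduct.lift ((Finsupp.lapply g).smulRight F))
      = (Finsupp.lapply (R := k) (M := k) g).smulRight (Cm.α F) := by
    apply Finsupp.lhom_ext
    intro a b
    have hc : TensorProduct.curry (TensorProduct.lift ((Finsupp.lapply g).smulRight F))
        (Finsupp.single a b) = (Finsupp.lapply (R := k) (M := k) g (Finsupp.single a b)) • F := by
      ext y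
      simp [TensorProduct.curry_apply]
    simp [hc, map_smul]
  have h2 : (TensorProduct.lift ((Finsupp.lapply g).smulRight F)) ∘ₗ comulG k G
      = (Finsupp.lapply (R := k) (M := k) g).smulRight (F (Finsupp.single g 1)) := by
    apply Finsupp.lhom_ext
    intro a b
    by_cases hag : a = g
    · subst hag
      simp [comulG]
    · simp [comulG, Finsupp.single_apply, hag]
  rw [h1, h2] at h
  exact h

lemma keyB {M : Type w} [AddCommGroup M] [Module k M] (Cm : KGContramod (k := k) (G := G) M)
    (m : M) (hm : ∀ g : G, Cm.α ((Finsupp.lapply g).smulRight m) = 0) : m = 0 := by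
  set B : (G →₀ k) →ₗ[k] ((G →₀ k) →ₗ[k] M) :=
    Finsupp.lsum k fun g' => LinearMap.toSpanSingleton k _ ((Finsupp.lapply g').smulRight m)
      with hB
  have h := Cm.contraassoc (TensorProduct.lift B)
  have h1 : Cm.α ∘ₗ TensorProduct.curry (TensorProduct.lift B) = 0 := by
    apply Finsupp.lhom_ext
    intro a b
    have : TensorProduct.curry (TensorProduct.lift B) (Finsupp.single a b) = B (Finsupp.single a b) := by
      ext y
      simp [TensorProduct.curry_apply]
    rw [LinearMap.comp_apply, this]
    simp only [LinearMap.comp_apply, this, hB, Finsupp.lsum_single,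
      LinearMap.toSpanSingleton_apply, map_smul, hm a, smul_zero, LinearMap.zero_apply]
  have h2 : (TensorProduct.lift B) ∘ₗ comulG k G = (counitG k G).smulRight m := by
    apply Finsupp.lhom_ext
    intro a b
    simp [comulG, counitG, hB]
  rw [h1, h2] at h
  simpa [Cm.counit_id m] using h.symm

/-- a right `kG`-contramodule `(M, α)` is determined by the family of
subspaces `M_g = α(δ_g(−)·M)`: the map `m ↦ (α(δ_g(−)m))_g` is a bijection
`M ≅ ∏_g M_g`.  (Here `δ_g` is the coefficient-at-`g` functional on `kG`.) -/
theorem stmt15 {M : Type w} [AddCommGroup M] [Module k M] (Cm : KGContramod (k := k) (G := G) M) :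
    Function.Bijective (fun (m : M) (g : G) =>
      (⟨Cm.α ((Finsupp.lapply g).smulRight m), Set.mem_range_self m⟩ :
        Set.range (fun m : M => Cm.α ((Finsupp.lapply g).smulRight m)))) := by
  constructor
  · intro m₁ m₂ h
    have hg : ∀ g : G, Cm.α ((Finsupp.lapply g).smulRight m₁)
        = Cm.α ((Finsupp.lapply g).smulRight m₂) := fun g =>
      congrArg Subtype.val (congrFun h g)
    have hsub : m₁ - m₂ = 0 := by
      apply keyB Cm
      intro g
      have hsr : (Finsupp.lapply (R := k) (M := k) g).smulRight (m₁ - m₂)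
          = (Finsupp.lapply g).smulRight m₁ - (Finsupp.lapply g).smulRight m₂ := by
        ext x
        simp [smul_sub]
      rw [hsr, map_sub, hg g, sub_self]
    exact sub_eq_zero.mp hsub
  · intro v
    -- each component is a fixed point of the corresponding idempotent
    have hfix : ∀ g : G, Cm.α ((Finsupp.lapply g).smulRight ((v g : M))) = (v g : M) := by
      intro g
      obtain ⟨m, hm⟩ := (v g).2
      have hidem := keyA Cm g ((Finsupp.lapply g).smulRight m)
      simp only [LinearMap.smulRight_apply, Finsupp.lapply_apply, Finsupp.single_eq_same,
        one_smul] at hidem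
      rw [← hm]
      exact hidem
    set F : (G →₀ k) →ₗ[k] M :=
      Finsupp.lsum k fun g => LinearMap.toSpanSingleton k M ((v g : M)) with hF
    refine ⟨Cm.α F, funext fun g => Subtype.ext ?_⟩
    have hA := keyA Cm g F
    have hFval : F (Finsupp.single g 1) = (v g : M) := by
      simp [hF]
    rw [hFval] at hA
    simpa [hfix g] using hA

end Statement15
end
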